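/- In the balanced matrix B_B with parameters γ_L, κ, ν = a·γ_L + b (0 ≤ b < γ_L, ν < κ), every row contains either a or a+1 zeros; specifically, rows 0,…,b−1 contain a+1 zeros each and rows b,…,γ_L−1 contain a zeros each. -/
import Mathlib


/-- In `B_B`, rows `0,…,b−1` contain `a+1` zeros and rows `b,…,γ_L−1` contain `a` zeros. -/
theorem stmt_6 (γL κ a b : ℕ) (hγ : 0 < γL) (hb : b < γL) (hν : a * γL + b < κ) :
    let ν := a * γL + b
    let BB : ℕ → ℕ → ℕ := fun i j =>
      if j < κ - ν then 1
      else if j < κ - ν + b then (if i = b - (j - (κ - ν)) - 1 then 0 else 1)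
      else (if i = γL - 1 - ((j - (κ - ν + b)) / a) then 0 else 1)
    ∀ i < γL,
      ((Finset.range κ).filter (fun j => BB i j = 0)).card = if i < b then a + 1 else a := by
  intro ν BB i hi
  have hκ : κ = (κ - ν) + b + a * γL := by omega
  have hmulγ : a * γL = γL * a := Nat.mul_comm _ _
  have hmul1 : a * (γL - 1 - i) = (γL - 1 - i) * a := Nat.mul_comm _ _
  have hmul2 : a * (γL - 1 - i) + a ≤ a * γL := by
    have h : a * (γL - 1 - i) + a = a * (γL - 1 - i + 1) := by ring
    rw [h]
    exact Nat.mul_le_mul_left a (by omega)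
  -- characterize membership
  have key : ∀ j, j ∈ (Finset.range κ).filter (fun j => BB i j = 0) ↔
      (i < b ∧ j = (κ - ν) + (b - 1 - i)) ∨
      ((κ - ν) + b + a * (γL - 1 - i) ≤ j ∧ j < (κ - ν) + b + a * (γL - 1 - i) + a) := by
    intro j
    simp only [Finset.mem_filter, Finset.mem_range, BB]
    constructor
    · rintro ⟨hjκ, hj0⟩
      by_cases h1 : j < κ - ν
      · rw [if_pos h1] at hj0; omega
      by_cases h2 : j < κ - ν + b
      · rw [if_neg h1, if_pos h2] at hj0
        left
        split_ifs at hj0 with h3 <;> omega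
      · rw [if_neg h1, if_neg h2] at hj0
        split_ifs at hj0 with h3
        right
        have ha : 0 < a := by
          rcases Nat.eq_zero_or_pos a with h0 | h0
          · subst h0; simp at hκ; omega
          · exact h0
        have hqlt : (j - (κ - ν + b)) / a < γL :=
          (Nat.div_lt_iff_lt_mul ha).mpr (by omega)
        have hq : (j - (κ - ν + b)) / a = γL - 1 - i := by omega
        have hdm : a * ((j - (κ - ν + b)) / a) + (j - (κ - ν + b)) % a
            = j - (κ - ν + b) := Nat.div_add_mod _ _
        have hmod : (j - (κ - ν + b)) % a < a := Nat.mod_lt _ ha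
        have hlink : a * ((j - (κ - ν + b)) / a) = a * (γL - 1 - i) := by rw [hq]
        omega
    · rintro (⟨hib, hj⟩ | ⟨hj1, hj2⟩)
      · refine ⟨by omega, ?_⟩
        rw [if_neg (by omega), if_pos (by omega), if_pos (by omega)]
      · have ha : 0 < a := by omega
        refine ⟨by omega, ?_⟩
        rw [if_neg (by omega), if_neg (by omega), if_pos]
        have hq : (j - (κ - ν + b)) / a = γL - 1 - i := by
          apply Nat.div_eq_of_lt_le
          · omega
          · have hexp : ((γL - 1 - i) + 1) * a = (γL - 1 - i) * a + a := by ring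
            omega
        omega
  -- rewrite the filter as explicit set
  have hset : (Finset.range κ).filter (fun j => BB i j = 0) =
      (if i < b then {(κ - ν) + (b - 1 - i)} else ∅) ∪
      Finset.Ico ((κ - ν) + b + a * (γL - 1 - i)) ((κ - ν) + b + a * (γL - 1 - i) + a) := by
    ext j
    rw [key j]
    simp only [Finset.mem_union, Finset.mem_Ico]
    split_ifs with h
    · simp only [Finset.mem_singleton]; tauto
    · simp only [Finset.notMem_empty, false_or]
      constructor
      · rintro (⟨h1, _⟩ | h2)
        · omega
        · exact h2
      · tauto
  rw [hset, Finset.card_union_of_disjoint, Nat.card_Ico]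
  · split_ifs with h
    · simp [Nat.add_comm]
    · simp
  · split_ifs with h
    · simp only [Finset.disjoint_singleton_left, Finset.mem_Ico]
      omega
    · exact Finset.disjoint_empty_left _
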